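/- Let φ : T_OP(X, X') → T_OP(Y, Y') be a semigroup isomorphism with induced map θ_φ. If α ∈ T_OP(X, X'), a ∈ ran α and aα⁻¹ ∩ X' ≠ ∅, then ā ∈ ran(φ(α)) and ā(φ(α))⁻¹ ∩ Y' = θ_φ(aα⁻¹ ∩ X'). -/
import Mathlib


open Set Function

/-- The semigroup of order-preserving self-maps of `X` with range contained in `X'`. -/
def OPR {X : Type*} [LinearOrder X] (X' : Set X) : Set (X → X) :=
  {f | Monotone f ∧ Set.range f ⊆ X'}

/-- `φ` is a semigroup isomorphism from `T_OP(X, X')` onto `T_OP(Y, Y')`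
(composition written left-to-right: `f * g = g ∘ f`). -/
def IsSgIso {X Y : Type*} [LinearOrder X] [LinearOrder Y] (X' : Set X) (Y' : Set Y)
    (φ : (X → X) → (Y → Y)) : Prop :=
  Set.BijOn φ (OPR X') (OPR Y') ∧
    ∀ f ∈ OPR X', ∀ g ∈ OPR X', φ (g ∘ f) = φ g ∘ φ f

lemma const_mem_OPR {X : Type*} [LinearOrder X] {X' : Set X} {a : X} (ha : a ∈ X') :
    Function.const X a ∈ OPR X' := by
  refine ⟨monotone_const, ?_⟩
  rintro x ⟨y, rfl⟩
  exact ha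

/-- if `a ∈ ran α` and `aα⁻¹ ∩ X' ≠ ∅` then `ā ∈ ran(φ(α))` and
`ā(φ(α))⁻¹ ∩ Y' = θ_φ(aα⁻¹ ∩ X')`. -/
theorem stmt_7 {X Y : Type*} [LinearOrder X] [LinearOrder Y] (X' : Set X) (Y' : Set Y)
    (hX' : X'.Nontrivial) (hY' : Y'.Nontrivial)
    (φ : (X → X) → (Y → Y)) (hφ : IsSgIso X' Y' φ)
    (θ : X → Y) (hbij : Set.BijOn θ X' Y')
    (hθ : ∀ a ∈ X', φ (Function.const X a) = Function.const Y (θ a)) :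
    ∀ α ∈ OPR X', ∀ a ∈ Set.range α, (α ⁻¹' {a} ∩ X').Nonempty →
      θ a ∈ Set.range (φ α) ∧ φ α ⁻¹' {θ a} ∩ Y' = θ '' (α ⁻¹' {a} ∩ X') := by
  obtain ⟨x0, hx0, -, -, -⟩ := hX'
  obtain ⟨y0, hy0, -, -, -⟩ := hY'
  rintro α hα a ha ⟨b, hb, hbX'⟩
  have haX' : a ∈ X' := hα.2 ha
  have hb' : α b = a := hb
  -- key computation: for b' ∈ X', φ α (θ b') = θ (α b')
  have key : ∀ b' ∈ X', φ α (θ b') = θ (α b') := by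
    intro b' hb'X
    have hαb' : α b' ∈ X' := hα.2 ⟨b', rfl⟩
    have h1 : α ∘ Function.const X b' = Function.const X (α b') := by
      funext x; rfl
    have h2 := hφ.2 (Function.const X b') (const_mem_OPR hb'X) α hα
    rw [h1, hθ _ hαb', hθ _ hb'X] at h2
    exact (congrFun h2 y0).symm
  constructor
  · exact ⟨θ b, by rw [key b hbX', hb']⟩
  · ext y
    constructor
    · rintro ⟨hy1, hy2⟩
      obtain ⟨b', hb'X, rfl⟩ := hbij.surjOn hy2
      have hφαy : φ α (θ b') = θ a := hy1
      -- show α b' = a via injectivity of φ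
      have hαb' : α b' ∈ X' := hα.2 ⟨b', rfl⟩
      have h1 : α ∘ Function.const X b' = Function.const X (α b') := by funext x; rfl
      have h2 := hφ.2 (Function.const X b') (const_mem_OPR hb'X) α hα
      rw [h1, hθ _ hαb', hθ _ hb'X] at h2
      have h3 : φ α ∘ Function.const Y (θ b') = Function.const Y (θ a) := by
        funext x; simpa using hφαy
      have h4 : φ (Function.const X (α b')) = φ (Function.const X a) := by
        rw [hθ _ hαb', hθ _ haX', h2, h3]
      have h5 : Function.const X (α b') = Function.const X a :=
        hφ.1.injOn (const_mem_OPR hαb') (const_mem_OPR haX') h4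
      have : α b' = a := congrFun h5 x0
      exact ⟨b', ⟨this, hb'X⟩, rfl⟩
    · rintro ⟨b', ⟨hb'1, hb'2⟩, rfl⟩
      have : α b' = a := hb'1
      refine ⟨?_, hbij.mapsTo hb'2⟩
      show φ α (θ b') = θ a
      rw [key b' hb'2, this]
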